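/- arXiv:0902.1328 — 2 statements merged into one kernel-verified Lean document; each statement's English description precedes it below -/
import Mathlib

section
/- Let μ be a probability measure on ℝ with finite first moment and let ν = μ^HL be its Hardy–Littlewood transform. Then λ·q̄_ν(λ) = ∫_0^λ q̄_μ(u) du for λ ∈ (0,1]; in particular λ ↦ λ·q̄_ν(λ) is concave, and the concave envelope construction applied to ν recovers μ, i.e. ν_Δ = μ where ν_Δ is the measure whose integrated tail quantile ∫_0^λ q̄_{ν_Δ}(u) du is the concave envelope of λ·q̄_ν(λ). -/
open MeasureTheory Set Filter Topology

/-- Tail function `μ([x,∞))`. -/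
noncomputable def tailFn (μ : Measure ℝ) (x : ℝ) : ℝ := (μ (Ici x)).toReal

/-- Tail quantile function: left-continuous inverse of the tail function. -/
noncomputable def tailQ (μ : Measure ℝ) (l : ℝ) : ℝ := sInf {x : ℝ | tailFn μ x < l}

/-- Call function `C_μ(K) = ∫ (s-K)⁺ μ(ds)`. -/
noncomputable def callFn (μ : Measure ℝ) (K : ℝ) : ℝ := ∫ s, max (s - K) 0 ∂μ

/-- Average Value at Risk at level `l`. -/
noncomputable def avar (μ : Measure ℝ) (l : ℝ) : ℝ := (1 / l) * ∫ u in (0 : ℝ)..l, tailQ μ u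

/-- Hardy–Littlewood transform of `μ`: the law of `AVaR_μ(ξ)` for `ξ` uniform on `[0,1]`. -/
noncomputable def hlTransform (μ : Measure ℝ) : Measure ℝ :=
  Measure.map (avar μ) (volume.restrict (Ioc (0 : ℝ) 1))


section aux
variable (ρ : Measure ℝ)

lemma tailFn_antitone [IsFiniteMeasure ρ] : Antitone (tailFn ρ) := fun x y hxy =>
  ENNReal.toReal_mono (measure_ne_top ρ _) (measure_mono (Ici_subset_Ici.2 hxy))

lemma tailFn_nonneg (x : ℝ) : 0 ≤ tailFn ρ x := ENNReal.toReal_nonneg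

lemma tailFn_le_one [IsProbabilityMeasure ρ] (x : ℝ) : tailFn ρ x ≤ 1 := by
  have h := ENNReal.toReal_mono (by simp) (prob_le_one (μ := ρ) (s := Ici x))
  simpa [tailFn] using h

lemma exists_tailFn_lt [IsFiniteMeasure ρ] {u : ℝ} (hu : 0 < u) : ∃ x, tailFn ρ x < u := by
  have h1 : Tendsto (fun n : ℕ => ρ (Ici (n : ℝ))) atTop (𝓝 (ρ (⋂ n : ℕ, Ici (n : ℝ)))) := by
    refine tendsto_measure_iInter_atTop (fun n => measurableSet_Ici.nullMeasurableSet)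
      (fun n m hnm => Ici_subset_Ici.2 (by exact_mod_cast hnm)) ⟨0, measure_ne_top _ _⟩
  have h2 : (⋂ n : ℕ, Ici (n : ℝ)) = ∅ := by
    ext x
    simp only [mem_iInter, mem_Ici, mem_empty_iff_false, iff_false, not_forall, not_le]
    obtain ⟨n, hn⟩ := exists_nat_gt x
    exact ⟨n, hn⟩
  rw [h2, measure_empty] at h1
  have h3 : ∀ᶠ n : ℕ in atTop, ρ (Ici (n : ℝ)) < ENNReal.ofReal u :=
    h1.eventually_lt_const (by simpa using hu)
  obtain ⟨n, hn⟩ := h3.exists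
  exact ⟨n, ENNReal.toReal_lt_of_lt_ofReal hn⟩

lemma exists_lt_tailFn [IsProbabilityMeasure ρ] {u : ℝ} (hu : u < 1) : ∃ x, u < tailFn ρ x := by
  rcases lt_or_ge u 0 with h | h
  · exact ⟨0, lt_of_lt_of_le h (tailFn_nonneg ρ 0)⟩
  have h1 : Tendsto (fun n : ℕ => ρ (Ici (-(n : ℝ)))) atTop (𝓝 (ρ (⋃ n : ℕ, Ici (-(n : ℝ))))) := by
    refine tendsto_measure_iUnion_atTop fun n m hnm => Ici_subset_Ici.2 ?_
    have : (n : ℝ) ≤ m := by exact_mod_cast hnm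
    linarith
  have h2 : (⋃ n : ℕ, Ici (-(n : ℝ))) = univ := by
    ext x
    simp only [mem_iUnion, mem_Ici, mem_univ, iff_true]
    obtain ⟨n, hn⟩ := exists_nat_gt (-x)
    exact ⟨n, by linarith⟩
  rw [h2, measure_univ] at h1
  have h3 : ∀ᶠ n : ℕ in atTop, ENNReal.ofReal u < ρ (Ici (-(n : ℝ))) :=
    h1.eventually_const_lt (ENNReal.ofReal_lt_one.2 hu)
  obtain ⟨n, hn⟩ := h3.exists
  exact ⟨-(n : ℝ), (ENNReal.ofReal_lt_iff_lt_toReal h (measure_ne_top _ _)).1 hn⟩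

lemma tailFn_leftcont [IsFiniteMeasure ρ] {x u : ℝ} (h : tailFn ρ x < u) :
    ∃ y < x, tailFn ρ y < u := by
  have hu : 0 < u := lt_of_le_of_lt (tailFn_nonneg ρ x) h
  have h1 : Tendsto (fun n : ℕ => ρ (Ici (x - 1 / (n + 1)))) atTop
      (𝓝 (ρ (⋂ n : ℕ, Ici (x - 1 / (n + 1))))) := by
    refine tendsto_measure_iInter_atTop (fun n => measurableSet_Ici.nullMeasurableSet)
      (fun n m hnm => Ici_subset_Ici.2 (by
        have : (1 : ℝ) / (m + 1) ≤ 1 / (n + 1) := by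
          apply one_div_le_one_div_of_le (by positivity)
          have : (n : ℝ) ≤ m := by exact_mod_cast hnm
          linarith
        linarith)) ⟨0, measure_ne_top _ _⟩
  have h2 : (⋂ n : ℕ, Ici (x - 1 / (n + 1))) = Ici x := by
    ext z
    simp only [mem_iInter, mem_Ici]
    constructor
    · intro hz
      by_contra hc
      push_neg at hc
      obtain ⟨n, hn⟩ := exists_nat_one_div_lt (by linarith : (0 : ℝ) < x - z)
      have := hz n
      linarith
    · intro hz n
      have : (0 : ℝ) < 1 / (n + 1) := by positivity
      linarith
  rw [h2] at h1
  have hlt : ρ (Ici x) < ENNReal.ofReal u :=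
    (ENNReal.lt_ofReal_iff_toReal_lt (measure_ne_top _ _)).2 h
  obtain ⟨n, hn⟩ := (h1.eventually_lt_const hlt).exists
  exact ⟨x - 1 / (n + 1), by
    constructor
    · have : (0 : ℝ) < 1 / (n + 1) := by positivity
      linarith
    · exact ENNReal.toReal_lt_of_lt_ofReal hn⟩

lemma tailQ_set_nonempty [IsFiniteMeasure ρ] {u : ℝ} (hu : 0 < u) :
    {x : ℝ | tailFn ρ x < u}.Nonempty := exists_tailFn_lt ρ hu

lemma tailQ_set_bddBelow [IsProbabilityMeasure ρ] {u : ℝ} (hu : u < 1) :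
    BddBelow {x : ℝ | tailFn ρ x < u} := by
  obtain ⟨x₀, hx₀⟩ := exists_lt_tailFn ρ hu
  refine ⟨x₀, fun y hy => ?_⟩
  by_contra hc
  push_neg at hc
  have := tailFn_antitone ρ hc.le
  simp only [mem_setOf_eq] at hy
  linarith

lemma le_tailQ_iff [IsProbabilityMeasure ρ] {u x : ℝ} (h0 : 0 < u) (h1 : u < 1) :
    x ≤ tailQ ρ u ↔ u ≤ tailFn ρ x := by
  constructor
  · intro h
    by_contra hc
    push_neg at hc
    obtain ⟨y, hyx, hy⟩ := tailFn_leftcont ρ hc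
    have : tailQ ρ u ≤ y := csInf_le (tailQ_set_bddBelow ρ h1) hy
    linarith
  · intro h
    refine le_csInf (tailQ_set_nonempty ρ h0) fun y hy => ?_
    simp only [mem_setOf_eq] at hy
    by_contra hc
    push_neg at hc
    have := tailFn_antitone ρ hc.le
    linarith

lemma tailQ_antitoneOn [IsProbabilityMeasure ρ] : AntitoneOn (tailQ ρ) (Ioo 0 1) := by
  intro u hu v hv huv
  exact csInf_le_csInf (tailQ_set_bddBelow ρ hv.2) (tailQ_set_nonempty ρ hu.1)
    fun x hx => lt_of_lt_of_le hx huv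

lemma tailQ_of_nonpos {u : ℝ} (hu : u ≤ 0) : tailQ ρ u = 0 := by
  have h : {x : ℝ | tailFn ρ x < u} = ∅ :=
    eq_empty_of_forall_notMem fun x hx =>
      absurd hx (not_lt.2 (hu.trans (tailFn_nonneg ρ x)))
  rw [tailQ, h, Real.sInf_empty]

lemma tailQ_of_one_lt [IsProbabilityMeasure ρ] {u : ℝ} (hu : 1 < u) : tailQ ρ u = 0 := by
  have h : {x : ℝ | tailFn ρ x < u} = univ :=
    eq_univ_of_forall fun x => lt_of_le_of_lt (tailFn_le_one ρ x) hu
  rw [tailQ, h, csInf_of_not_bddBelow, Real.sInf_empty]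
  intro ⟨c, hc⟩
  have := hc (mem_univ (c - 1))
  linarith

end aux

section master
variable (ρ : Measure ℝ)

lemma restrict_Ioc_eq_Ioo :
    (volume : Measure ℝ).restrict (Ioc (0:ℝ) 1) = volume.restrict (Ioo (0:ℝ) 1) :=
  (Measure.restrict_congr_set Ioo_ae_eq_Ioc).symm

instance : IsProbabilityMeasure ((volume : Measure ℝ).restrict (Ioo (0:ℝ) 1)) := by
  constructor
  rw [Measure.restrict_apply_univ, Real.volume_Ioo]
  simp

lemma aemble_tailQ [IsProbabilityMeasure ρ] :
    AEMeasurable (tailQ ρ) (volume.restrict (Ioo (0:ℝ) 1)) :=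
  aemeasurable_restrict_of_antitoneOn measurableSet_Ioo (tailQ_antitoneOn ρ)

lemma map_tailQ [IsProbabilityMeasure ρ] :
    Measure.map (tailQ ρ) (volume.restrict (Ioo (0:ℝ) 1)) = ρ := by
  have hae := aemble_tailQ ρ
  haveI : IsProbabilityMeasure (Measure.map (tailQ ρ) (volume.restrict (Ioo (0:ℝ) 1))) :=
    Measure.isProbabilityMeasure_map hae
  refine Measure.ext_of_Ici _ _ fun x => ?_
  rw [Measure.map_apply_of_aemeasurable hae measurableSet_Ici,
    Measure.restrict_apply' measurableSet_Ioo]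
  have hset : tailQ ρ ⁻¹' Ici x ∩ Ioo 0 1 = Iic (tailFn ρ x) ∩ Ioo 0 1 := by
    ext u
    simp only [mem_inter_iff, mem_preimage, mem_Ici, mem_Ioo, mem_Iic]
    constructor
    · rintro ⟨h, hu0, hu1⟩
      exact ⟨(le_tailQ_iff ρ hu0 hu1).1 h, hu0, hu1⟩
    · rintro ⟨h, hu0, hu1⟩
      exact ⟨(le_tailQ_iff ρ hu0 hu1).2 h, hu0, hu1⟩
  rw [hset]
  have hρx : ρ (Ici x) = ENNReal.ofReal (tailFn ρ x) :=
    (ENNReal.ofReal_toReal (measure_ne_top ρ _)).symm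
  rcases lt_or_ge (tailFn ρ x) 1 with hc | hc
  · have : Iic (tailFn ρ x) ∩ Ioo 0 1 = Ioc 0 (tailFn ρ x) := by
      ext u
      simp only [mem_inter_iff, mem_Iic, mem_Ioo, mem_Ioc]
      exact ⟨fun ⟨h1, h2, _⟩ => ⟨h2, h1⟩, fun ⟨h1, h2⟩ => ⟨h2, h1, lt_of_le_of_lt h2 hc⟩⟩
    rw [this, Real.volume_Ioc, hρx, sub_zero]
  · have hc1 : tailFn ρ x = 1 := le_antisymm (tailFn_le_one ρ x) hc
    have : Iic (tailFn ρ x) ∩ Ioo 0 1 = Ioo 0 1 := by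
      ext u
      simp only [mem_inter_iff, mem_Iic, mem_Ioo, hc1]
      exact ⟨fun h => h.2, fun h => ⟨h.2.le, h⟩⟩
    rw [this, Real.volume_Ioo, hρx, hc1]
    simp

lemma integrableOn_tailQ [IsProbabilityMeasure ρ] (h : Integrable id ρ) :
    IntegrableOn (tailQ ρ) (Ioo (0:ℝ) 1) := by
  rw [← map_tailQ ρ] at h
  have := (integrable_map_measure aestronglyMeasurable_id (aemble_tailQ ρ)).mp h
  simpa [Function.comp, IntegrableOn] using this

lemma integrable_tailQ [IsProbabilityMeasure ρ] (h : Integrable id ρ) :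
    Integrable (tailQ ρ) (volume : Measure ℝ) := by
  have h1 : IntegrableOn (tailQ ρ) (Ioc (0:ℝ) 1) := by
    rw [IntegrableOn, restrict_Ioc_eq_Ioo]
    exact integrableOn_tailQ ρ h
  have h2 : tailQ ρ = (Ioc (0:ℝ) 1).indicator (tailQ ρ) := by
    funext u
    by_cases hu : u ∈ Ioc (0:ℝ) 1
    · rw [indicator_of_mem hu]
    · rw [indicator_of_notMem hu]
      simp only [mem_Ioc, not_and_or, not_lt, not_le] at hu
      rcases hu with h' | h'
      · exact tailQ_of_nonpos ρ h'
      · exact tailQ_of_one_lt ρ h'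
  rw [h2]
  exact (integrable_indicator_iff measurableSet_Ioc).2 h1

lemma continuous_primF [IsProbabilityMeasure ρ] (h : Integrable id ρ) :
    Continuous fun l => ∫ u in (0:ℝ)..l, tailQ ρ u :=
  (integrable_tailQ ρ h).continuous_primitive 0

lemma primF_eq_Ioo {l : ℝ} (hl : 0 ≤ l) :
    (∫ u in (0:ℝ)..l, tailQ ρ u) = ∫ u in Ioo (0:ℝ) l, tailQ ρ u := by
  rw [intervalIntegral.integral_of_le hl, ← integral_Ioc_eq_integral_Ioo]

end master

section conc
variable (ρ : Measure ℝ) [IsProbabilityMeasure ρ]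

lemma setIntegral_const_Ioo {a b c : ℝ} (hab : a ≤ b) :
    ∫ _ in Ioo a b, c = (b - a) * c := by
  rw [setIntegral_const, Real.volume_real_Ioo_of_le hab, smul_eq_mul]

lemma integral_Ioo_ge (h : Integrable id ρ) {a b : ℝ} (hab : a ≤ b)
    (h0 : 0 ≤ a) (h1 : b ≤ 1) {c : ℝ} (hc : ∀ u ∈ Ioo a b, c ≤ tailQ ρ u) :
    (b - a) * c ≤ ∫ u in Ioo a b, tailQ ρ u := by
  rw [← setIntegral_const_Ioo hab]
  refine setIntegral_mono_on (integrableOn_const measure_Ioo_lt_top.ne)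
    ((integrableOn_tailQ ρ h).mono_set (Ioo_subset_Ioo h0 h1)) measurableSet_Ioo hc

lemma integral_Ioo_le (h : Integrable id ρ) {a b : ℝ} (hab : a ≤ b)
    (h0 : 0 ≤ a) (h1 : b ≤ 1) {c : ℝ} (hc : ∀ u ∈ Ioo a b, tailQ ρ u ≤ c) :
    (∫ u in Ioo a b, tailQ ρ u) ≤ (b - a) * c := by
  rw [← setIntegral_const_Ioo hab]
  refine setIntegral_mono_on ((integrableOn_tailQ ρ h).mono_set (Ioo_subset_Ioo h0 h1))
    (integrableOn_const measure_Ioo_lt_top.ne) measurableSet_Ioo hc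

lemma primF_diff (h : Integrable id ρ) {a b : ℝ} (hab : a ≤ b) (h0 : 0 ≤ a) :
    (∫ u in (0:ℝ)..b, tailQ ρ u) - (∫ u in (0:ℝ)..a, tailQ ρ u)
      = ∫ u in Ioo a b, tailQ ρ u := by
  have hint := integrable_tailQ ρ h
  rw [intervalIntegral.integral_interval_sub_left hint.intervalIntegrable hint.intervalIntegrable,
    intervalIntegral.integral_of_le hab, ← integral_Ioc_eq_integral_Ioo]

lemma concave_primF (h : Integrable id ρ) :
    ConcaveOn ℝ (Icc (0:ℝ) 1) (fun l => ∫ u in (0:ℝ)..l, tailQ ρ u) := by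
  set F := fun l => ∫ u in (0:ℝ)..l, tailQ ρ u with hF
  have key : ∀ x ∈ Icc (0:ℝ) 1, ∀ y ∈ Icc (0:ℝ) 1, x ≤ y → ∀ a b : ℝ,
      0 ≤ a → 0 ≤ b → a + b = 1 → a * F x + b * F y ≤ F (a * x + b * y) := by
    intro x hx y hy hxy a b ha hb hab
    set m := a * x + b * y with hm
    have hx1 : a * x + b * x = x := by linear_combination x * hab
    have hy1 : a * y + b * y = y := by linear_combination y * hab
    have hbxy : b * x ≤ b * y := mul_le_mul_of_nonneg_left hxy hb
    have haxy : a * x ≤ a * y := mul_le_mul_of_nonneg_left hxy ha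
    have hxm : x ≤ m := by rw [hm]; linarith
    have hmy : m ≤ y := by rw [hm]; linarith
    have hFab : a * F x + b * F x = F x := by linear_combination (F x) * hab
    have hFab' : a * F y + b * F y = F y := by linear_combination (F y) * hab
    rcases eq_or_lt_of_le hxy with rfl | hxy'
    · have hmx0 : m = x := by rw [hm]; linarith
      rw [hmx0]; linarith
    rcases eq_or_lt_of_le ha with rfl | ha'
    · have hb1 : b = 1 := by linarith
      have hmy0 : m = y := by rw [hm, hb1]; ring
      rw [hmy0, hb1]; simp
    rcases eq_or_lt_of_le hb with rfl | hb'
    · have ha1 : a = 1 := by linarith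
      have hmx0 : m = x := by rw [hm, ha1]; ring
      rw [hmx0, ha1]; simp
    have hxm' : x < m := by
      have : b * x < b * y := mul_lt_mul_of_pos_left hxy' hb'
      rw [hm]; linarith
    have hmy' : m < y := by
      have : a * x < a * y := mul_lt_mul_of_pos_left hxy' ha'
      rw [hm]; linarith
    have hm0 : 0 < m := lt_of_le_of_lt hx.1 hxm'
    have hm1 : m < 1 := lt_of_lt_of_le hmy' hy.2
    have hA : (m - x) * tailQ ρ m ≤ ∫ u in Ioo x m, tailQ ρ u := by
      refine integral_Ioo_ge ρ h hxm hx.1 (le_of_lt hm1) fun u hu => ?_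
      exact tailQ_antitoneOn ρ ⟨lt_of_le_of_lt hx.1 hu.1, lt_trans hu.2 hm1⟩ ⟨hm0, hm1⟩ hu.2.le
    have hB : (∫ u in Ioo m y, tailQ ρ u) ≤ (y - m) * tailQ ρ m := by
      refine integral_Ioo_le ρ h hmy hm0.le hy.2 fun u hu => ?_
      exact tailQ_antitoneOn ρ ⟨hm0, hm1⟩ ⟨lt_trans hm0 hu.1, lt_of_lt_of_le hu.2 hy.2⟩ hu.1.le
    have e1 : F m - F x = ∫ u in Ioo x m, tailQ ρ u := primF_diff ρ h hxm hx.1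
    have e2 : F y - F m = ∫ u in Ioo m y, tailQ ρ u := primF_diff ρ h hmy hm0.le
    have hmx : m - x = b * (y - x) := by rw [hm]; linear_combination x * hab
    have hym : y - m = a * (y - x) := by rw [hm]; linear_combination (-y) * hab
    have hm1' : a * F m + b * F m = F m := by linear_combination (F m) * hab
    have p1 := mul_le_mul_of_nonneg_left hA ha
    have p2 := mul_le_mul_of_nonneg_left hB hb
    have q1 : a * ((m - x) * tailQ ρ m) = b * ((y - m) * tailQ ρ m) := by
      rw [hmx, hym]; ring
    have e1' : a * ∫ u in Ioo x m, tailQ ρ u = a * F m - a * F x := by rw [← e1]; ring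
    have e2' : b * ∫ u in Ioo m y, tailQ ρ u = b * F y - b * F m := by rw [← e2]; ring
    linarith
  refine ⟨convex_Icc 0 1, fun x hx y hy a b ha hb hab => ?_⟩
  simp only [smul_eq_mul]
  rcases le_total x y with hxy | hxy
  · exact key x hx y hy hxy a b ha hb hab
  · have := key y hy x hx hxy b a hb ha (by linarith)
    calc a * F x + b * F y = b * F y + a * F x := by ring
    _ ≤ F (b * y + a * x) := this
    _ = F (a * x + b * y) := by rw [add_comm]

lemma avar_eq (h : Integrable id ρ) {l : ℝ} (hl : 0 < l) :
    avar ρ l = (1 / l) * ∫ u in Ioo (0:ℝ) l, tailQ ρ u := by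
  rw [avar, primF_eq_Ioo ρ hl.le]

lemma avar_antitoneOn (h : Integrable id ρ) : AntitoneOn (avar ρ) (Ioc 0 1) := by
  intro a ha b hb hab
  rcases eq_or_lt_of_le hab with rfl | hlt
  · exact le_refl _
  have ha0 : 0 < a := ha.1
  have hb0 : 0 < b := hb.1
  have ha1 : a < 1 := lt_of_lt_of_le hlt hb.2
  set I₀ := ∫ u in Ioo (0:ℝ) a, tailQ ρ u with hI₀
  set I₁ := ∫ u in Ioo a b, tailQ ρ u with hI₁
  have hkey : ∀ u ∈ Ioo a b, tailQ ρ u ≤ I₀ / a := by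
    intro u hu
    have hu01 : u ∈ Ioo (0:ℝ) 1 := ⟨lt_trans ha0 hu.1, lt_of_lt_of_le hu.2 hb.2⟩
    have : a * tailQ ρ u ≤ I₀ := by
      have := integral_Ioo_ge ρ h ha0.le le_rfl ha1.le
        (c := tailQ ρ u) (fun v hv => tailQ_antitoneOn ρ ⟨hv.1, lt_trans hv.2 ha1⟩ hu01
          (le_of_lt (lt_trans hv.2 hu.1)))
      linarith [this]
    rw [le_div_iff₀ ha0]
    linarith
  have hI₁le : I₁ ≤ (b - a) * (I₀ / a) := integral_Ioo_le ρ h hlt.le ha0.le hb.2 hkey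
  have hFb : (∫ u in Ioo (0:ℝ) b, tailQ ρ u) = I₀ + I₁ := by
    have e1 := primF_diff ρ h hlt.le ha0.le
    rw [primF_eq_Ioo ρ ha0.le, primF_eq_Ioo ρ hb0.le] at e1
    rw [hI₀, hI₁, ← e1]; ring
  rw [avar_eq ρ h ha0, avar_eq ρ h hb0, hFb]
  rw [one_div_mul_eq_div, one_div_mul_eq_div, div_le_div_iff₀ hb0 ha0]
  have hkey2 : a * I₁ ≤ (b - a) * I₀ := by
    have h2 := mul_le_mul_of_nonneg_left hI₁le ha0.le
    have h3 : a * ((b - a) * (I₀ / a)) = (b - a) * I₀ := by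
      rw [mul_comm a, mul_assoc, div_mul_cancel₀ _ ha0.ne']
    linarith
  nlinarith [hkey2]

lemma measurable_avar (h : Integrable id ρ) : Measurable (avar ρ) :=
  (measurable_const.div measurable_id).mul (continuous_primF ρ h).measurable

lemma continuousAt_avar (h : Integrable id ρ) {l : ℝ} (hl : l ≠ 0) :
    ContinuousAt (avar ρ) l :=
  ((continuousAt_const.div continuousAt_id hl)).mul ((continuous_primF ρ h).continuousAt)

end conc

section hl
variable (μ : Measure ℝ) [IsProbabilityMeasure μ]

lemma tailFn_hl (h : Integrable id μ) (x : ℝ) :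
    tailFn (hlTransform μ) x = (volume (avar μ ⁻¹' Ici x ∩ Ioc (0:ℝ) 1)).toReal := by
  rw [tailFn, hlTransform, Measure.map_apply (measurable_avar μ h) measurableSet_Ici,
    Measure.restrict_apply' measurableSet_Ioc]

lemma tailQ_hl (h : Integrable id μ) {l : ℝ} (hl : l ∈ Ioc (0:ℝ) 1) :
    tailQ (hlTransform μ) l = avar μ l := by
  have hanti := avar_antitoneOn μ h
  have hl0 : 0 < l := hl.1
  have hl1 : l ≤ 1 := hl.2
  have hfin : ∀ x : ℝ, volume (avar μ ⁻¹' Ici x ∩ Ioc (0:ℝ) 1) ≠ ⊤ := fun x =>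
    ne_top_of_le_ne_top (by rw [Real.volume_Ioc]; simp) (measure_mono inter_subset_right)
  have ha : ∀ x : ℝ, tailFn (hlTransform μ) x < l → avar μ l < x := by
    intro x hx
    by_contra hc
    push_neg at hc
    have hsub : Ioc (0:ℝ) l ⊆ avar μ ⁻¹' Ici x ∩ Ioc 0 1 := by
      intro u hu
      have hu1 : u ∈ Ioc (0:ℝ) 1 := ⟨hu.1, hu.2.trans hl1⟩
      exact ⟨le_trans hc (hanti hu1 hl hu.2), hu1⟩
    have hge : (l:ℝ) ≤ tailFn (hlTransform μ) x := by
      rw [tailFn_hl μ h]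
      calc l = (ENNReal.ofReal l).toReal := (ENNReal.toReal_ofReal hl0.le).symm
      _ ≤ (volume (avar μ ⁻¹' Ici x ∩ Ioc (0:ℝ) 1)).toReal := by
        refine ENNReal.toReal_mono (hfin x) ?_
        rw [show ENNReal.ofReal l = volume (Ioc (0:ℝ) l) by rw [Real.volume_Ioc, sub_zero]]
        exact measure_mono hsub
    linarith
  have hne : {x : ℝ | tailFn (hlTransform μ) x < l}.Nonempty := by
    refine ⟨avar μ (l/2) + 1, ?_⟩
    have hsub : avar μ ⁻¹' Ici (avar μ (l/2) + 1) ∩ Ioc 0 1 ⊆ Ioc (0:ℝ) (l/2) := by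
      intro u hu
      rcases le_or_gt u (l/2) with h' | h'
      · exact ⟨hu.2.1, h'⟩
      · exfalso
        have hl2 : l/2 ∈ Ioc (0:ℝ) 1 := ⟨by linarith, by linarith⟩
        have h2 := hanti hl2 hu.2 h'.le
        have hx := hu.1
        simp only [mem_preimage, mem_Ici] at hx
        linarith
    simp only [mem_setOf_eq]
    rw [tailFn_hl μ h]
    calc (volume (avar μ ⁻¹' Ici (avar μ (l/2) + 1) ∩ Ioc (0:ℝ) 1)).toReal
        ≤ (volume (Ioc (0:ℝ) (l/2))).toReal :=
          ENNReal.toReal_mono (by rw [Real.volume_Ioc]; simp) (measure_mono hsub)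
    _ = l/2 := by rw [Real.volume_Ioc, sub_zero, ENNReal.toReal_ofReal (by linarith)]
    _ < l := by linarith
  have hbdd : BddBelow {x : ℝ | tailFn (hlTransform μ) x < l} := by
    refine ⟨avar μ 1, fun x hx => ?_⟩
    by_contra hc
    push_neg at hc
    have hsub : Ioc (0:ℝ) 1 ⊆ avar μ ⁻¹' Ici x ∩ Ioc 0 1 := fun u hu =>
      ⟨le_trans hc.le (hanti hu (right_mem_Ioc.2 one_pos) hu.2), hu⟩
    simp only [mem_setOf_eq] at hx
    rw [tailFn_hl μ h] at hx
    have h1 : (1:ℝ) ≤ (volume (avar μ ⁻¹' Ici x ∩ Ioc (0:ℝ) 1)).toReal := by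
      calc (1:ℝ) = (volume (Ioc (0:ℝ) 1)).toReal := by
            rw [Real.volume_Ioc]; simp
      _ ≤ _ := ENNReal.toReal_mono (hfin x) (measure_mono hsub)
    linarith
  have hub : ∀ ε > (0:ℝ), tailFn (hlTransform μ) (avar μ l + ε) < l := by
    intro ε hε
    obtain ⟨δ, hδ0, hδ⟩ := Metric.continuousAt_iff.1 (continuousAt_avar μ h hl0.ne') ε hε
    set δ' := min (δ/2) (l/2) with hδ'
    have hδ'0 : 0 < δ' := lt_min (by linarith) (by linarith)
    have hδ'δ : δ' < δ := lt_of_le_of_lt (min_le_left _ _) (by linarith)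
    have hδ'l : δ' ≤ l/2 := min_le_right _ _
    have hsub : avar μ ⁻¹' Ici (avar μ l + ε) ∩ Ioc 0 1 ⊆ Ioc (0:ℝ) (l - δ') := by
      intro u hu
      have hx := hu.1
      simp only [mem_preimage, mem_Ici] at hx
      refine ⟨hu.2.1, ?_⟩
      by_contra hc
      push_neg at hc
      rcases le_or_gt u l with h' | h'
      · have hd : dist u l < δ := by
          rw [Real.dist_eq, abs_lt]; constructor <;> linarith
        have h2 := hδ hd
        rw [Real.dist_eq] at h2
        have h3 := abs_lt.1 h2
        linarith [h3.1, h3.2]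
      · have h2 := hanti hl hu.2 h'.le
        linarith
    rw [tailFn_hl μ h]
    calc (volume (avar μ ⁻¹' Ici (avar μ l + ε) ∩ Ioc (0:ℝ) 1)).toReal
        ≤ (volume (Ioc (0:ℝ) (l - δ'))).toReal :=
          ENNReal.toReal_mono (by rw [Real.volume_Ioc]; simp) (measure_mono hsub)
    _ ≤ l - δ' := by
        rw [Real.volume_Ioc, sub_zero, ENNReal.toReal_ofReal (by linarith)]
    _ < l := by linarith
  have hge : avar μ l ≤ tailQ (hlTransform μ) l :=
    le_csInf hne fun x hx => (ha x hx).le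
  have hle : tailQ (hlTransform μ) l ≤ avar μ l :=
    le_of_forall_pos_le_add fun ε hε => csInf_le hbdd (hub ε hε)
  linarith

lemma part1_aux (h : Integrable id μ) {l : ℝ} (hl : l ∈ Ioc (0:ℝ) 1) :
    l * tailQ (hlTransform μ) l = ∫ u in (0:ℝ)..l, tailQ μ u := by
  rw [tailQ_hl μ h hl, avar, ← mul_assoc, mul_one_div_cancel hl.1.ne', one_mul]

end hl

section ae
variable (ρ : Measure ℝ) [IsProbabilityMeasure ρ]

lemma countable_discont_tailQ :
    (Ioo (0:ℝ) 1 ∩ {u | ¬ContinuousAt (tailQ ρ) u}).Countable := by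
  have hab : ∀ n : ℕ, (0:ℝ) < 1/((n:ℝ)+3) ∧ 1/((n:ℝ)+3) ≤ 1 - 1/((n:ℝ)+3) ∧
      1 - 1/((n:ℝ)+3) < 1 := by
    intro n
    have h1 : (0:ℝ) < (n:ℝ) + 3 := by positivity
    have h2 : (1:ℝ)/(n+3) ≤ 1/3 := by
      apply one_div_le_one_div_of_le (by norm_num)
      have : (0:ℝ) ≤ n := Nat.cast_nonneg n
      linarith
    have h3 : (0:ℝ) < 1/((n:ℝ)+3) := by positivity
    exact ⟨h3, by linarith, by linarith⟩
  set g : ℕ → ℝ → ℝ := fun n v => tailQ ρ (min (max v (1/(n+3))) (1 - 1/(n+3))) with hg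
  have hganti : ∀ n, Antitone (g n) := by
    intro n v w hvw
    obtain ⟨h1, h2, h3⟩ := hab n
    have hcl : ∀ z : ℝ, min (max z (1/((n:ℝ)+3))) (1 - 1/(n+3)) ∈ Ioo (0:ℝ) 1 := by
      intro z
      constructor
      · exact lt_min (lt_of_lt_of_le h1 (le_max_right _ _)) (lt_of_lt_of_le h1 h2)
      · exact lt_of_le_of_lt (min_le_right _ _) h3
    exact tailQ_antitoneOn ρ (hcl v) (hcl w)
      (min_le_min (max_le_max hvw le_rfl) le_rfl)
  have hcov : Ioo (0:ℝ) 1 ∩ {u | ¬ContinuousAt (tailQ ρ) u} ⊆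
      ⋃ n : ℕ, {u | ¬ContinuousAt (g n) u} := by
    rintro u ⟨hu, hdis⟩
    obtain ⟨n, hn⟩ := exists_nat_one_div_lt (lt_min hu.1 (by linarith [hu.2]) : (0:ℝ) < min u (1 - u))
    have h13 : (1:ℝ)/(n+3) < min u (1-u) := by
      refine lt_of_le_of_lt ?_ hn
      apply one_div_le_one_div_of_le (by positivity)
      push_cast
      linarith
    have hu1 : 1/((n:ℝ)+3) < u := lt_of_lt_of_le h13 (min_le_left _ _)
    have hu2 : u < 1 - 1/((n:ℝ)+3) := by
      have := lt_of_lt_of_le h13 (min_le_right _ _)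
      linarith
    refine mem_iUnion.2 ⟨n, fun hc => hdis ?_⟩
    refine hc.congr (eventuallyEq_of_mem (Ioo_mem_nhds hu1 hu2) fun v hv => ?_)
    simp only [hg]
    rw [max_eq_left hv.1.le, min_eq_left hv.2.le]
  refine Countable.mono hcov ?_
  exact countable_iUnion fun n => (hganti n).countable_not_continuousAt

lemma ae_continuousAt_tailQ :
    ∀ᵐ u ∂(volume.restrict (Ioo (0:ℝ) 1)), ContinuousAt (tailQ ρ) u := by
  rw [ae_iff, Measure.restrict_apply' measurableSet_Ioo]
  refine measure_mono_null (fun u hu => ?_) ((countable_discont_tailQ ρ).measure_zero _)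
  exact ⟨hu.2, hu.1⟩

end ae

lemma measure_eq_of_primitive_eq (σ μ' : Measure ℝ) [IsProbabilityMeasure σ]
    [IsProbabilityMeasure μ'] (hσ : Integrable id σ) (hμ : Integrable id μ')
    (heq : ∀ l ∈ Icc (0:ℝ) 1, (∫ u in (0:ℝ)..l, tailQ σ u) = ∫ u in (0:ℝ)..l, tailQ μ' u) :
    σ = μ' := by
  have key : ∀ u ∈ Ioo (0:ℝ) 1, ContinuousAt (tailQ σ) u → ContinuousAt (tailQ μ') u →
      tailQ σ u = tailQ μ' u := by
    intro u hu hcσ hcμ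
    have hmσ : StronglyMeasurableAtFilter (tailQ σ) (𝓝 u) volume :=
      ⟨univ, univ_mem, by
        rw [Measure.restrict_univ]; exact (integrable_tailQ σ hσ).aestronglyMeasurable⟩
    have hmμ : StronglyMeasurableAtFilter (tailQ μ') (𝓝 u) volume :=
      ⟨univ, univ_mem, by
        rw [Measure.restrict_univ]; exact (integrable_tailQ μ' hμ).aestronglyMeasurable⟩
    have h1 : HasDerivAt (fun l => ∫ v in (0:ℝ)..l, tailQ σ v) (tailQ σ u) u :=
      intervalIntegral.integral_hasDerivAt_right
        (integrable_tailQ σ hσ).intervalIntegrable hmσ hcσ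
    have h2 : HasDerivAt (fun l => ∫ v in (0:ℝ)..l, tailQ μ' v) (tailQ μ' u) u :=
      intervalIntegral.integral_hasDerivAt_right
        (integrable_tailQ μ' hμ).intervalIntegrable hmμ hcμ
    have h3 : (fun l => ∫ v in (0:ℝ)..l, tailQ μ' v) =ᶠ[𝓝 u]
        fun l => ∫ v in (0:ℝ)..l, tailQ σ v :=
      eventuallyEq_of_mem (Icc_mem_nhds hu.1 hu.2) fun l hl => (heq l hl).symm
    exact (h1.congr_of_eventuallyEq h3).unique h2
  have hae : tailQ σ =ᵐ[volume.restrict (Ioo (0:ℝ) 1)] tailQ μ' := by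
    filter_upwards [ae_continuousAt_tailQ σ, ae_continuousAt_tailQ μ',
      ae_restrict_mem measurableSet_Ioo] with u h1 h2 h3
    exact key u h3 h1 h2
  calc σ = Measure.map (tailQ σ) (volume.restrict (Ioo (0:ℝ) 1)) := (map_tailQ σ).symm
  _ = Measure.map (tailQ μ') (volume.restrict (Ioo (0:ℝ) 1)) := Measure.map_congr hae
  _ = μ' := map_tailQ μ'

theorem stmt_12 (μ : Measure ℝ) [IsProbabilityMeasure μ] (hμ : Integrable id μ) :
    (∀ l ∈ Ioc (0 : ℝ) 1, l * tailQ (hlTransform μ) l = ∫ u in (0 : ℝ)..l, tailQ μ u) ∧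
    ConcaveOn ℝ (Icc (0 : ℝ) 1) (fun l => l * tailQ (hlTransform μ) l) ∧
    (∀ (σ : Measure ℝ), IsProbabilityMeasure σ → Integrable id σ →
      ∀ G : ℝ → ℝ,
        ConcaveOn ℝ (Icc (0 : ℝ) 1) G →
        (∀ l ∈ Icc (0 : ℝ) 1, l * tailQ (hlTransform μ) l ≤ G l) →
        (∀ G₂ : ℝ → ℝ, ConcaveOn ℝ (Icc (0 : ℝ) 1) G₂ →
          (∀ l ∈ Icc (0 : ℝ) 1, l * tailQ (hlTransform μ) l ≤ G₂ l) →
          ∀ l ∈ Icc (0 : ℝ) 1, G l ≤ G₂ l) →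
        (∀ l ∈ Icc (0 : ℝ) 1, G l = ∫ u in (0 : ℝ)..l, tailQ σ u) →
        σ = μ) := by
  have hHF : ∀ l ∈ Icc (0:ℝ) 1, l * tailQ (hlTransform μ) l = ∫ u in (0:ℝ)..l, tailQ μ u := by
    intro l hl
    rcases eq_or_lt_of_le hl.1 with rfl | hl0
    · simp [intervalIntegral.integral_same]
    · exact part1_aux μ hμ ⟨hl0, hl.2⟩
  have hFconc := concave_primF μ hμ
  refine ⟨fun l hl => part1_aux μ hμ hl, ?_, ?_⟩
  · refine ⟨convex_Icc 0 1, fun x hx y hy a b ha hb hab => ?_⟩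
    have hm : a • x + b • y ∈ Icc (0:ℝ) 1 := (convex_Icc 0 1) hx hy ha hb hab
    simp only [smul_eq_mul] at hm ⊢
    rw [hHF x hx, hHF y hy, hHF _ hm]
    have := hFconc.2 hx hy ha hb hab
    simpa using this
  · intro σ hσp hσint G hGc hGge hGmin hGeq
    haveI := hσp
    have hge' : ∀ l ∈ Icc (0:ℝ) 1,
        l * tailQ (hlTransform μ) l ≤ (fun l => ∫ u in (0:ℝ)..l, tailQ μ u) l :=
      fun l hl => le_of_eq (hHF l hl)
    have hGle := hGmin (fun l => ∫ u in (0:ℝ)..l, tailQ μ u) hFconc hge'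
    have heq : ∀ l ∈ Icc (0:ℝ) 1,
        (∫ u in (0:ℝ)..l, tailQ σ u) = ∫ u in (0:ℝ)..l, tailQ μ u := by
      intro l hl
      have e1 := hGeq l hl
      have e2 := hGle l hl
      have e3 := hGge l hl
      have e4 := hHF l hl
      linarith
    exact measure_eq_of_primitive_eq σ μ hσint hμ heq
end

section
/- Let (N_t) be a non-negative càdlàg local martingale with N_0 > 0. Then the first time either N or its left limit N_{-} hits 0 equals the first time N itself hits 0: inf{t : N_t = 0 or N_{t−} = 0} = inf{t : N_t = 0}, and N_u = 0 for all u after this time. -/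
open MeasureTheory Set Filter Topology
open scoped NNReal

/-- A process is a local martingale if there is a localizing sequence of stopping
times, tending a.s. to infinity, such that each stopped process is a martingale. -/
def IsLocalMartingale {Ω : Type*} {m : MeasurableSpace Ω} (𝒢 : Filtration ℝ≥0 m)
    (N : ℝ≥0 → Ω → ℝ) (ℙ : Measure Ω) : Prop :=
  ∃ τ : ℕ → Ω → ℝ≥0, (∀ n, IsStoppingTime 𝒢 (fun ω => (τ n ω : WithTop ℝ≥0))) ∧
    (∀ᵐ ω ∂ℙ, Tendsto (fun n => τ n ω) atTop atTop) ∧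
    ∀ n, Martingale (MeasureTheory.stoppedProcess N (fun ω => (τ n ω : WithTop ℝ≥0))) 𝒢 ℙ

/-- Right-continuity of paths with existence of left limits (càdlàg). -/
def CadlagPaths {Ω : Type*} (N : ℝ≥0 → Ω → ℝ) : Prop :=
  ∀ ω, (∀ t : ℝ≥0, ContinuousWithinAt (fun s => N s ω) (Ici t) t) ∧
    ∀ t : ℝ≥0, 0 < t → ∃ l : ℝ, Tendsto (fun s => N s ω) (nhdsWithin t (Iio t)) (nhds l)

open scoped ENNReal

section Pathwise
variable {f g : ℝ≥0 → ℝ} {D : Set ℝ≥0}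

lemma aux_propagate (hrc : ∀ t : ℝ≥0, ContinuousWithinAt f (Ici t) t)
    (hnn : ∀ t, 0 ≤ f t) (hD : Dense D)
    (hstar : ∀ q ∈ D, (∀ ε : ℝ, 0 < ε → ∃ r ∈ D, r ≤ q ∧ f r < ε) → f q = 0)
    {t0 : ℝ≥0} (h0 : f t0 = 0) : ∀ u, t0 ≤ u → f u = 0 := by
  have stepA : ∀ d ∈ D, t0 < d → f d = 0 := by
    intro d hd htd
    refine hstar d hd fun ε hε => ?_
    have htd0 : Tendsto f (𝓝[≥] t0) (𝓝 0) := h0 ▸ hrc t0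
    have hev : ∀ᶠ s in 𝓝[≥] t0, f s < ε := htd0.eventually_lt_const hε
    rw [eventually_nhdsWithin_iff] at hev
    obtain ⟨b, hb, hsub⟩ := exists_Ico_subset_of_mem_nhds hev (exists_gt t0)
    obtain ⟨r, hrD, hr1, hr2⟩ := hD.exists_between (show t0 < min b d from lt_min hb htd)
    exact ⟨r, hrD, (hr2.trans_le (min_le_right _ _)).le,
      hsub ⟨hr1.le, hr2.trans_le (min_le_left _ _)⟩ hr1.le⟩
  intro u hu
  rcases eq_or_lt_of_le hu with rfl | hu
  · exact h0
  · refine le_antisymm ?_ (hnn u)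
    by_contra h'
    push_neg at h'
    have hev : ∀ᶠ s in 𝓝[≥] u, f u - f u < f s := (hrc u).eventually_const_lt (by linarith)
    rw [eventually_nhdsWithin_iff] at hev
    obtain ⟨b, hb, hsub⟩ := exists_Ico_subset_of_mem_nhds hev (exists_gt u)
    obtain ⟨d, hdD, hd1, hd2⟩ := hD.exists_between hb
    have : f d = 0 := stepA d hdD (hu.trans hd1)
    have := hsub ⟨hd1.le, hd2⟩ hd1.le
    simp [this] at *
    linarith
-- if the left limit at t is 0, then f vanishes on D ∩ [t, ∞)
lemma aux_leftlimit (hD : Dense D)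
    (hstar : ∀ q ∈ D, (∀ ε : ℝ, 0 < ε → ∃ r ∈ D, r ≤ q ∧ f r < ε) → f q = 0)
    {t : ℝ≥0} (ht : 0 < t) (hlim : Tendsto f (𝓝[<] t) (𝓝 0)) :
    ∀ d ∈ D, t ≤ d → f d = 0 := by
  intro d hd htd
  refine hstar d hd fun ε hε => ?_
  have hev : ∀ᶠ s in 𝓝[<] t, f s < ε := hlim.eventually_lt_const hε
  rw [eventually_nhdsWithin_iff] at hev
  obtain ⟨b, hb, hsub⟩ := exists_Ioc_subset_of_mem_nhds' hev ht
  obtain ⟨r, hrD, hr1, hr2⟩ := hD.exists_between hb.2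
  exact ⟨r, hrD, (hr2.trans_le htd).le, hsub ⟨hr1, hr2.le⟩ hr2⟩

lemma aux_pathwise (hrc : ∀ t : ℝ≥0, ContinuousWithinAt f (Ici t) t)
    (hnn : ∀ t, 0 ≤ f t) (hD : Dense D)
    (hstar : ∀ q ∈ D, (∀ ε : ℝ, 0 < ε → ∃ r ∈ D, r ≤ q ∧ f r < ε) → f q = 0)
    (hc : 0 < f 0) (hg0 : g 0 = f 0)
    (hgt : ∀ t : ℝ≥0, 0 < t → Tendsto f (𝓝[<] t) (𝓝 (g t))) :
    sInf {t : ℝ≥0 | f t = 0 ∨ g t = 0} = sInf {t : ℝ≥0 | f t = 0} ∧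
      ({t : ℝ≥0 | f t = 0}.Nonempty → ∀ u : ℝ≥0, sInf {t : ℝ≥0 | f t = 0} ≤ u → f u = 0) := by
  set S : Set ℝ≥0 := {t | f t = 0} with hS
  -- any t with g t = 0 has 0 < t and forces zeros of f on D beyond t
  have hgkey : ∀ t : ℝ≥0, g t = 0 → ∀ d ∈ D, t ≤ d → f d = 0 := by
    intro t hgt0 d hd htd
    have ht : 0 < t := by
      rcases eq_or_lt_of_le (show (0:ℝ≥0) ≤ t from zero_le) with rfl | h
      · rw [hg0] at hgt0; exact absurd hgt0 (by linarith)
      · exact h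
    exact aux_leftlimit hD hstar ht (hgt0 ▸ hgt t ht) d hd htd
  have claim2 : S.Nonempty → ∀ u : ℝ≥0, sInf S ≤ u → f u = 0 := by
    intro hSne u hu
    -- first: f (sInf S) = 0
    have hfT : f (sInf S) = 0 := by
      refine le_antisymm ?_ (hnn _)
      by_contra h'
      push_neg at h'
      have hev : ∀ᶠ s in 𝓝[≥] sInf S, f (sInf S) - f (sInf S) < f s :=
        (hrc (sInf S)).eventually_const_lt (by linarith)
      rw [eventually_nhdsWithin_iff] at hev
      obtain ⟨b, hb, hsub⟩ := exists_Ico_subset_of_mem_nhds hev (exists_gt (sInf S))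
      obtain ⟨t0, ht0S, ht0b⟩ := exists_lt_of_csInf_lt hSne hb
      have hT0 : sInf S ≤ t0 := csInf_le (OrderBot.bddBelow S) ht0S
      have := hsub ⟨hT0, ht0b⟩ hT0
      rw [ht0S] at this
      linarith
    exact aux_propagate hrc hnn hD hstar hfT u hu
  constructor
  · rcases eq_empty_or_nonempty S with hSe | hSne
    · -- S empty: show bigger set also empty
      have : {t : ℝ≥0 | f t = 0 ∨ g t = 0} = (∅ : Set ℝ≥0) := by
        ext t
        simp only [mem_setOf_eq, mem_empty_iff_false, iff_false]
        rintro (h | h)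
        · exact absurd (show t ∈ S from h) (by simp [hSe])
        · obtain ⟨d, hdD, hd1, _⟩ := hD.exists_between (lt_add_one t)
          exact absurd (show d ∈ S from hgkey t h d hdD hd1.le) (by simp [hSe])
      rw [this, hSe]
    · refine le_antisymm (csInf_le_csInf (OrderBot.bddBelow _) hSne fun t ht => Or.inl ht) ?_
      refine le_csInf (hSne.mono fun t ht => Or.inl ht) ?_
      rintro t (ht | ht)
      · exact csInf_le (OrderBot.bddBelow _) ht
      · by_contra h'
        push_neg at h'
        obtain ⟨d, hdD, hd1, hd2⟩ := hD.exists_between h'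
        exact absurd (csInf_le (OrderBot.bddBelow _) (show d ∈ S from hgkey t ht d hdD hd1.le))
          (not_le.mpr hd2)
  · exact claim2
end Pathwise

noncomputable def auxM {Ω : Type*} (N : ℝ≥0 → Ω → ℝ) (τ : ℕ → Ω → ℝ≥0) (t : ℝ≥0) (ω : Ω) : ℝ :=
  (Filter.liminf (fun n => ENNReal.ofReal (MeasureTheory.stoppedProcess N (fun ω => (τ n ω : WithTop ℝ≥0)) t ω)) atTop).toReal

lemma stoppedProcess_coe_of_le {Ω : Type*} (N : ℝ≥0 → Ω → ℝ) (τ : Ω → ℝ≥0) {t : ℝ≥0} {ω : Ω}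
    (h : t ≤ τ ω) : MeasureTheory.stoppedProcess N (fun ω => (τ ω : WithTop ℝ≥0)) t ω = N t ω := by
  simp only [MeasureTheory.stoppedProcess]
  rw [min_eq_left (WithTop.coe_le_coe.mpr h)]; rfl

section Meas
set_option linter.unusedSectionVars false
variable {Ω : Type*} {m : MeasurableSpace Ω} {ℙ : Measure Ω} [IsProbabilityMeasure ℙ]
  {𝒢 : Filtration ℝ≥0 m} {N : ℝ≥0 → Ω → ℝ} {τ : ℕ → Ω → ℝ≥0}

lemma auxM_meas (hmart : ∀ n, Martingale (MeasureTheory.stoppedProcess N (fun ω => (τ n ω : WithTop ℝ≥0))) 𝒢 ℙ)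
    (t : ℝ≥0) : Measurable[𝒢 t] (auxM N τ t) := by
  apply ENNReal.measurable_toReal.comp
  apply Measurable.liminf (fun n => ?_)
  exact ENNReal.measurable_ofReal.comp ((hmart n).stronglyAdapted t).measurable

lemma auxM_ae (hnn : ∀ t ω, 0 ≤ N t ω)
    (htend : ∀ᵐ ω ∂ℙ, Tendsto (fun n => τ n ω) atTop atTop)
    (t : ℝ≥0) : auxM N τ t =ᵐ[ℙ] N t := by
  filter_upwards [htend] with ω hω
  have hev : ∀ᶠ n in atTop, MeasureTheory.stoppedProcess N (fun ω => (τ n ω : WithTop ℝ≥0)) t ω = N t ω := by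
    filter_upwards [hω.eventually_ge_atTop t] with n hn
    exact stoppedProcess_coe_of_le N (τ n) hn
  have : Filter.liminf (fun n => ENNReal.ofReal (MeasureTheory.stoppedProcess N (fun ω => (τ n ω : WithTop ℝ≥0)) t ω)) atTop
      = ENNReal.ofReal (N t ω) := by
    rw [liminf_congr (hev.mono fun n hn => by rw [hn]), liminf_const]
  rw [auxM, this, ENNReal.toReal_ofReal (hnn t ω)]

lemma aux_stopped_integral (hmart : ∀ n, Martingale (MeasureTheory.stoppedProcess N (fun ω => (τ n ω : WithTop ℝ≥0))) 𝒢 ℙ)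
    {c : ℝ} (h0 : ∀ ω, N 0 ω = c) (n : ℕ) (t : ℝ≥0) :
    ∫ ω, MeasureTheory.stoppedProcess N (fun ω => (τ n ω : WithTop ℝ≥0)) t ω ∂ℙ = c := by
  have h1 := (hmart n).condExp_ae_eq (show (0:ℝ≥0) ≤ t from zero_le)
  have h2 : ∫ ω, (ℙ[MeasureTheory.stoppedProcess N (fun ω => (τ n ω : WithTop ℝ≥0)) t|𝒢 0]) ω ∂ℙ
      = ∫ ω, MeasureTheory.stoppedProcess N (fun ω => (τ n ω : WithTop ℝ≥0)) t ω ∂ℙ := integral_condExp (𝒢.le 0)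
  rw [← h2, integral_congr_ae h1]
  have : MeasureTheory.stoppedProcess N (fun ω => (τ n ω : WithTop ℝ≥0)) 0 = fun ω => c := by
    funext ω; rw [stoppedProcess_coe_of_le N (τ n) zero_le, h0]
  rw [this]
  simp

lemma aux_integrable (hmart : ∀ n, Martingale (MeasureTheory.stoppedProcess N (fun ω => (τ n ω : WithTop ℝ≥0))) 𝒢 ℙ)
    (hnn : ∀ t ω, 0 ≤ N t ω)
    (htend : ∀ᵐ ω ∂ℙ, Tendsto (fun n => τ n ω) atTop atTop)
    {c : ℝ} (h0 : ∀ ω, N 0 ω = c) (t : ℝ≥0) : Integrable (N t) ℙ := by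
  constructor
  · exact (((auxM_meas hmart t).mono (𝒢.le t) le_rfl).aestronglyMeasurable).congr
      (auxM_ae hnn htend t)
  · rw [hasFiniteIntegral_iff_norm]
    have heq : ∀ᵐ ω ∂ℙ, ENNReal.ofReal ‖N t ω‖ =
        Filter.liminf (fun n => ENNReal.ofReal (MeasureTheory.stoppedProcess N (fun ω => (τ n ω : WithTop ℝ≥0)) t ω)) atTop := by
      filter_upwards [htend] with ω hω
      have hev : ∀ᶠ n in atTop, MeasureTheory.stoppedProcess N (fun ω => (τ n ω : WithTop ℝ≥0)) t ω = N t ω := by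
        filter_upwards [hω.eventually_ge_atTop t] with n hn
        exact stoppedProcess_coe_of_le N (τ n) hn
      rw [liminf_congr (hev.mono fun n hn => by rw [hn]), liminf_const,
        Real.norm_of_nonneg (hnn t ω)]
    calc ∫⁻ ω, ENNReal.ofReal ‖N t ω‖ ∂ℙ
        = ∫⁻ ω, Filter.liminf (fun n => ENNReal.ofReal (MeasureTheory.stoppedProcess N (fun ω => (τ n ω : WithTop ℝ≥0)) t ω)) atTop ∂ℙ :=
          lintegral_congr_ae heq
      _ ≤ Filter.liminf (fun n => ∫⁻ ω, ENNReal.ofReal (MeasureTheory.stoppedProcess N (fun ω => (τ n ω : WithTop ℝ≥0)) t ω) ∂ℙ) atTop := by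
          apply lintegral_liminf_le fun n => ?_
          exact ENNReal.measurable_ofReal.comp (((hmart n).stronglyAdapted t).mono (𝒢.le t)).measurable
      _ = Filter.liminf (fun _ : ℕ => ENNReal.ofReal c) atTop := by
          apply liminf_congr
          apply Eventually.of_forall fun n => ?_
          rw [← ofReal_integral_eq_lintegral_ofReal ((hmart n).integrable t)
            (Eventually.of_forall fun ω => hnn _ ω), aux_stopped_integral hmart h0]
      _ = ENNReal.ofReal c := liminf_const _
      _ < ⊤ := ENNReal.ofReal_lt_top
lemma aux_supermart (hmart : ∀ n, Martingale (MeasureTheory.stoppedProcess N (fun ω => (τ n ω : WithTop ℝ≥0))) 𝒢 ℙ)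
    (hnn : ∀ t ω, 0 ≤ N t ω)
    (htend : ∀ᵐ ω ∂ℙ, Tendsto (fun n => τ n ω) atTop atTop)
    {c : ℝ} (h0 : ∀ ω, N 0 ω = c) {s t : ℝ≥0} (hst : s ≤ t) :
    ℙ[N t|𝒢 s] ≤ᵐ[ℙ] N s := by
  set sp : ℕ → ℝ≥0 → Ω → ℝ := fun n => MeasureTheory.stoppedProcess N (fun ω => (τ n ω : WithTop ℝ≥0)) with hsp
  have hspnn : ∀ n u ω, 0 ≤ sp n u ω := fun n u ω => hnn _ ω
  set G : ℕ → Ω → ℝ := fun k ω => (⨅ i : ℕ, ENNReal.ofReal (sp (k + i) t ω)).toReal with hG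
  have hGnn : ∀ k ω, 0 ≤ G k ω := fun k ω => ENNReal.toReal_nonneg
  have hGle : ∀ k i ω, G k ω ≤ sp (k + i) t ω := by
    intro k i ω
    have h1 : (⨅ j : ℕ, ENNReal.ofReal (sp (k + j) t ω)) ≤ ENNReal.ofReal (sp (k + i) t ω) :=
      iInf_le _ i
    calc G k ω ≤ (ENNReal.ofReal (sp (k + i) t ω)).toReal :=
          ENNReal.toReal_mono ENNReal.ofReal_ne_top h1
      _ = sp (k + i) t ω := ENNReal.toReal_ofReal (hspnn _ _ _)
  have hGmono : Monotone fun k => G k := by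
    apply monotone_nat_of_le_succ
    intro k
    intro ω
    apply ENNReal.toReal_mono
    · exact ne_top_of_le_ne_top ENNReal.ofReal_ne_top (iInf_le _ 0)
    · refine le_iInf fun i => ?_
      have := iInf_le (fun j : ℕ => ENNReal.ofReal (sp (k + j) t ω)) (i + 1)
      rwa [show k + (i + 1) = k + 1 + i by ring] at this
  have hGmeas : ∀ k, Measurable (G k) := by
    intro k
    apply ENNReal.measurable_toReal.comp
    apply Measurable.iInf fun i => ?_
    exact ENNReal.measurable_ofReal.comp (((hmart (k + i)).stronglyAdapted t).mono (𝒢.le t)).measurable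
  have hGint : ∀ k, Integrable (G k) ℙ := by
    intro k
    refine Integrable.mono ((hmart k).integrable t) (hGmeas k).aestronglyMeasurable ?_
    refine Eventually.of_forall fun ω => ?_
    rw [Real.norm_of_nonneg (hGnn k ω), Real.norm_of_nonneg (hspnn k t ω)]
    simpa using hGle k 0 ω
  -- a.e. facts about convergence
  have hGev : ∀ᵐ ω ∂ℙ, (∀ᶠ k in atTop, G k ω = N t ω) ∧ (∀ k, G k ω ≤ N t ω) ∧
      (∀ᶠ k in atTop, sp k s ω = N s ω) := by
    filter_upwards [htend] with ω hω
    obtain ⟨K, hK⟩ := eventually_atTop.mp (hω.eventually_ge_atTop t)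
    have hsp_eq : ∀ n, K ≤ n → sp n t ω = N t ω := by
      intro n hn; exact stoppedProcess_coe_of_le N (τ n) (hK n hn)
    refine ⟨?_, ?_, ?_⟩
    · refine eventually_atTop.mpr ⟨K, fun k hk => ?_⟩
      have : ∀ i : ℕ, sp (k + i) t ω = N t ω := fun i => hsp_eq _ (le_trans hk (Nat.le_add_right _ _))
      simp only [hG]
      rw [show (fun i : ℕ => ENNReal.ofReal (sp (k + i) t ω)) = fun _ => ENNReal.ofReal (N t ω) by
        funext i; rw [this i]]
      rw [iInf_const, ENNReal.toReal_ofReal (hnn t ω)]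
    · intro k
      have := hGle k K ω
      rwa [hsp_eq (k + K) (Nat.le_add_left _ _)] at this
    · obtain ⟨K', hK'⟩ := eventually_atTop.mp (hω.eventually_ge_atTop s)
      refine eventually_atTop.mpr ⟨K', fun k hk => ?_⟩
      exact stoppedProcess_coe_of_le N (τ k) (hK' k hk)
  have hintNt : Integrable (N t) ℙ := aux_integrable hmart hnn htend h0 t
  have hintNs : Integrable (N s) ℙ := aux_integrable hmart hnn htend h0 s
  -- conditional expectation inequalities
  have hcond1 : ∀ k, ℙ[G k|𝒢 s] ≤ᵐ[ℙ] ℙ[N t|𝒢 s] := by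
    intro k
    refine condExp_mono (hGint k) hintNt ?_
    filter_upwards [hGev] with ω hω using hω.2.1 k
  have hcond2 : ∀ k, ℙ[G k|𝒢 s] ≤ᵐ[ℙ] sp k s := by
    intro k
    refine EventuallyLE.trans (condExp_mono (hGint k) ((hmart k).integrable t)
      (Eventually.of_forall fun ω => by simpa [hsp] using hGle k 0 ω)) ?_
    exact ((hmart k).condExp_ae_eq hst).le
  -- integral convergence
  have hIt : Tendsto (fun k => ∫ ω, G k ω ∂ℙ) atTop (𝓝 (∫ ω, N t ω ∂ℙ)) := by
    refine tendsto_integral_of_dominated_convergence (fun ω => N t ω)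
      (fun k => (hGmeas k).aestronglyMeasurable) hintNt ?_ ?_
    · intro k
      filter_upwards [hGev] with ω hω
      rw [Real.norm_of_nonneg (hGnn k ω)]
      exact hω.2.1 k
    · filter_upwards [hGev] with ω hω
      exact Tendsto.congr' (hω.1.mono fun k hk => hk.symm) tendsto_const_nhds
  -- the D_k and lintegral argument
  set D : ℕ → Ω → ℝ := fun k ω => (ℙ[N t|𝒢 s]) ω - (ℙ[G k|𝒢 s]) ω with hD
  have hDint : ∀ k, Integrable (D k) ℙ := fun k => integrable_condExp.sub integrable_condExp
  have hDnn : ∀ k, 0 ≤ᵐ[ℙ] D k := by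
    intro k
    filter_upwards [hcond1 k] with ω hω
    simp [hD, sub_nonneg, hω]
  have hDI : ∀ k, ∫ ω, D k ω ∂ℙ = ∫ ω, N t ω ∂ℙ - ∫ ω, G k ω ∂ℙ := by
    intro k
    rw [integral_sub integrable_condExp integrable_condExp]
    congr 1
    · exact integral_condExp (𝒢.le s)
    · exact integral_condExp (𝒢.le s)
  have hPbound : ∀ᵐ ω ∂ℙ, ENNReal.ofReal ((ℙ[N t|𝒢 s]) ω - N s ω) ≤
      liminf (fun k => ENNReal.ofReal (D k ω)) atTop := by
    have hc2 : ∀ᵐ ω ∂ℙ, ∀ k, (ℙ[G k|𝒢 s]) ω ≤ sp k s ω := ae_all_iff.mpr hcond2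
    filter_upwards [hGev, hc2] with ω hω hω2
    have hev : ∀ᶠ k in atTop, ENNReal.ofReal ((ℙ[N t|𝒢 s]) ω - N s ω) ≤
        ENNReal.ofReal (D k ω) := by
      filter_upwards [hω.2.2] with k hk
      apply ENNReal.ofReal_le_ofReal
      have := hω2 k
      rw [hk] at this
      simp only [hD]
      linarith
    calc ENNReal.ofReal ((ℙ[N t|𝒢 s]) ω - N s ω)
        = liminf (fun _ : ℕ => ENNReal.ofReal ((ℙ[N t|𝒢 s]) ω - N s ω)) atTop := (liminf_const _).symm
      _ ≤ liminf (fun k => ENNReal.ofReal (D k ω)) atTop := liminf_le_liminf hev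
  have hDmeas : ∀ k, Measurable (D k) := by
    intro k
    exact ((stronglyMeasurable_condExp.mono (𝒢.le s)).measurable).sub
      ((stronglyMeasurable_condExp.mono (𝒢.le s)).measurable)
  have hkey : ∫⁻ ω, ENNReal.ofReal ((ℙ[N t|𝒢 s]) ω - N s ω) ∂ℙ = 0 := by
    have h1 : ∫⁻ ω, ENNReal.ofReal ((ℙ[N t|𝒢 s]) ω - N s ω) ∂ℙ ≤
        liminf (fun k => ∫⁻ ω, ENNReal.ofReal (D k ω) ∂ℙ) atTop := by
      calc ∫⁻ ω, ENNReal.ofReal ((ℙ[N t|𝒢 s]) ω - N s ω) ∂ℙ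
          ≤ ∫⁻ ω, liminf (fun k => ENNReal.ofReal (D k ω)) atTop ∂ℙ := lintegral_mono_ae hPbound
        _ ≤ liminf (fun k => ∫⁻ ω, ENNReal.ofReal (D k ω) ∂ℙ) atTop :=
            lintegral_liminf_le fun k => ENNReal.measurable_ofReal.comp (hDmeas k)
      
    have h2 : Tendsto (fun k => ∫⁻ ω, ENNReal.ofReal (D k ω) ∂ℙ) atTop (𝓝 0) := by
      have heq : ∀ k, ∫⁻ ω, ENNReal.ofReal (D k ω) ∂ℙ =
          ENNReal.ofReal (∫ ω, N t ω ∂ℙ - ∫ ω, G k ω ∂ℙ) := by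
        intro k
        rw [← ofReal_integral_eq_lintegral_ofReal (hDint k) (hDnn k), hDI k]
      simp only [heq]
      have : Tendsto (fun k => ∫ ω, N t ω ∂ℙ - ∫ ω, G k ω ∂ℙ) atTop (𝓝 0) := by
        have h := Tendsto.sub (tendsto_const_nhds (x := ∫ ω, N t ω ∂ℙ)) hIt
        simpa using h
      have := (ENNReal.continuous_ofReal.tendsto 0).comp this
      simpa [Function.comp_def] using this
    refine le_antisymm ?_ zero_le
    calc ∫⁻ ω, ENNReal.ofReal ((ℙ[N t|𝒢 s]) ω - N s ω) ∂ℙ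
        ≤ liminf (fun k => ∫⁻ ω, ENNReal.ofReal (D k ω) ∂ℙ) atTop := h1
      _ = 0 := h2.liminf_eq
  have haem : AEMeasurable (fun ω => ENNReal.ofReal ((ℙ[N t|𝒢 s]) ω - N s ω)) ℙ := by
    apply ENNReal.measurable_ofReal.comp_aemeasurable
    exact ((stronglyMeasurable_condExp.mono (𝒢.le s)).measurable.aemeasurable).sub
      hintNs.aestronglyMeasurable.aemeasurable
  have := (lintegral_eq_zero_iff' haem).mp hkey
  filter_upwards [this] with ω hω
  simp only [Pi.zero_apply, ENNReal.ofReal_eq_zero] at hω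
  linarith
lemma aux_set_supermart (hmart : ∀ n, Martingale (MeasureTheory.stoppedProcess N (fun ω => (τ n ω : WithTop ℝ≥0))) 𝒢 ℙ)
    (hnn : ∀ t ω, 0 ≤ N t ω)
    (htend : ∀ᵐ ω ∂ℙ, Tendsto (fun n => τ n ω) atTop atTop)
    {c : ℝ} (h0 : ∀ ω, N 0 ω = c) {s t : ℝ≥0} (hst : s ≤ t)
    {A : Set Ω} (hA : MeasurableSet[𝒢 s] A) :
    ∫ ω in A, N t ω ∂ℙ ≤ ∫ ω in A, N s ω ∂ℙ := by
  rw [← setIntegral_condExp (𝒢.le s) (aux_integrable hmart hnn htend h0 t) hA]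
  refine integral_mono_ae (integrable_condExp.integrableOn)
    ((aux_integrable hmart hnn htend h0 s).integrableOn) ?_
  exact ae_restrict_of_ae (aux_supermart hmart hnn htend h0 hst)

lemma aux_grid (hmart : ∀ n, Martingale (MeasureTheory.stoppedProcess N (fun ω => (τ n ω : WithTop ℝ≥0))) 𝒢 ℙ)
    (hnn : ∀ t ω, 0 ≤ N t ω)
    (htend : ∀ᵐ ω ∂ℙ, Tendsto (fun n => τ n ω) atTop atTop)
    {c : ℝ} (h0 : ∀ ω, N 0 ω = c) {ε : ℝ} (hε : 0 < ε) (F : Finset ℝ≥0) :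
    ∀ q : ℝ≥0, (∀ r ∈ F, r ≤ q) →
      ∫ ω in (⋃ r ∈ F, {ω | auxM N τ r ω < ε}), N q ω ∂ℙ ≤
        ε * (ℙ (⋃ r ∈ F, {ω | auxM N τ r ω < ε})).toReal := by
  classical
  have hBmeas : ∀ r : ℝ≥0, MeasurableSet[𝒢 r] {ω | auxM N τ r ω < ε} :=
    fun r => (auxM_meas hmart r) measurableSet_Iio
  have hBm : ∀ r : ℝ≥0, MeasurableSet {ω | auxM N τ r ω < ε} :=
    fun r => (𝒢.le r) _ (hBmeas r)
  induction F using Finset.induction_on_max with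
  | empty => intro q _; simp
  | insert a F' hmax IH =>
    intro q hq
    have hle' : ∀ r ∈ F', r ≤ a := fun r hr => (hmax r hr).le
    have haq : a ≤ q := hq a (Finset.mem_insert_self a F')
    set B : ℝ≥0 → Set Ω := fun r => {ω | auxM N τ r ω < ε} with hB
    set A' : Set Ω := ⋃ r ∈ F', B r with hA'
    have hA'G : MeasurableSet[𝒢 a] A' :=
      F'.measurableSet_biUnion fun r hr => (𝒢.mono (hle' r hr)) _ (hBmeas r)
    have hA'm : MeasurableSet A' := (𝒢.le a) _ hA'G
    have hUG : MeasurableSet[𝒢 a] (A' ∪ (B a \ A')) :=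
      hA'G.union (((hBmeas a).diff hA'G))
    have hUm : MeasurableSet (A' ∪ (B a \ A')) := (𝒢.le a) _ hUG
    have hrw : (⋃ r ∈ insert a F', B r) = A' ∪ (B a \ A') := by
      rw [Finset.set_biUnion_insert, Set.union_diff_self, Set.union_comm]
    rw [hrw]
    have hint : ∀ u : ℝ≥0, ∀ S : Set Ω, IntegrableOn (N u) S ℙ :=
      fun u S => (aux_integrable hmart hnn htend h0 u).integrableOn
    have step1 : ∫ ω in A' ∪ (B a \ A'), N q ω ∂ℙ ≤ ∫ ω in A' ∪ (B a \ A'), N a ω ∂ℙ :=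
      aux_set_supermart hmart hnn htend h0 haq hUG
    have step2 : ∫ ω in A' ∪ (B a \ A'), N a ω ∂ℙ =
        ∫ ω in A', N a ω ∂ℙ + ∫ ω in B a \ A', N a ω ∂ℙ :=
      setIntegral_union disjoint_sdiff_self_right ((hBm a).diff hA'm) (hint a _) (hint a _)
    have step3 : ∫ ω in A', N a ω ∂ℙ ≤ ε * (ℙ A').toReal := IH a hle'
    have step4 : ∫ ω in B a \ A', N a ω ∂ℙ ≤ ε * (ℙ (B a \ A')).toReal := by
      have hae : ∀ᵐ ω ∂ℙ.restrict (B a \ A'), N a ω ≤ ε := by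
        have h1 : ∀ᵐ ω ∂ℙ.restrict (B a \ A'), auxM N τ a ω = N a ω :=
          ae_restrict_of_ae (auxM_ae hnn htend a)
        have h2 := ae_restrict_mem (μ := ℙ) ((hBm a).diff hA'm)
        filter_upwards [h1, h2] with ω hω1 hω2
        rw [← hω1]
        exact le_of_lt hω2.1
      calc ∫ ω in B a \ A', N a ω ∂ℙ ≤ ∫ _ω in B a \ A', ε ∂ℙ :=
            integral_mono_ae (hint a _) (integrable_const ε).integrableOn hae
        _ = (ℙ (B a \ A')).toReal * ε := by rw [setIntegral_const]; simp [smul_eq_mul, Measure.real]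
        _ = ε * (ℙ (B a \ A')).toReal := mul_comm _ _
    have hme : ℙ (A' ∪ (B a \ A')) = ℙ A' + ℙ (B a \ A') :=
      measure_union disjoint_sdiff_self_right ((hBm a).diff hA'm)
    calc ∫ ω in A' ∪ (B a \ A'), N q ω ∂ℙ ≤ ε * (ℙ A').toReal + ε * (ℙ (B a \ A')).toReal := by
          rw [step2] at step1; linarith
      _ = ε * (ℙ (A' ∪ (B a \ A'))).toReal := by
          rw [hme, ENNReal.toReal_add (measure_ne_top _ _) (measure_ne_top _ _)]; ring
lemma aux_cover (hmart : ∀ n, Martingale (MeasureTheory.stoppedProcess N (fun ω => (τ n ω : WithTop ℝ≥0))) 𝒢 ℙ)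
    (hnn : ∀ t ω, 0 ≤ N t ω)
    (htend : ∀ᵐ ω ∂ℙ, Tendsto (fun n => τ n ω) atTop atTop)
    {c : ℝ} (h0 : ∀ ω, N 0 ω = c) {ε : ℝ} (hε : 0 < ε) {D : Set ℝ≥0} (hDc : D.Countable)
    {q : ℝ≥0} (hq : q ∈ D) :
    ∫ ω in (⋃ r ∈ D ∩ Iic q, {ω | auxM N τ r ω < ε}), N q ω ∂ℙ ≤ ε := by
  classical
  have hBm : ∀ r : ℝ≥0, MeasurableSet {ω | auxM N τ r ω < ε} :=
    fun r => (𝒢.le r) _ ((auxM_meas hmart r) measurableSet_Iio)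
  obtain ⟨e, he⟩ := Set.Countable.exists_eq_range (hDc.mono (inter_subset_left))
    ⟨q, hq, mem_Iic.mpr le_rfl⟩
  set S : ℕ → Set Ω := fun k => ⋃ r ∈ (Finset.range k).image e, {ω | auxM N τ r ω < ε} with hS
  have hSsub : ∀ k, ∀ r ∈ (Finset.range k).image e, r ≤ q := by
    intro k r hr
    obtain ⟨i, _, rfl⟩ := Finset.mem_image.mp hr
    have : e i ∈ D ∩ Iic q := he ▸ mem_range_self i
    exact this.2
  have hSm : ∀ k, MeasurableSet (S k) :=
    fun k => ((Finset.range k).image e).measurableSet_biUnion fun r _ => hBm r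
  have hSmono : Monotone S := by
    intro k l hkl
    apply Set.biUnion_subset_biUnion_left
    intro r hr
    obtain ⟨i, hi, rfl⟩ := Finset.mem_image.mp hr
    exact Finset.mem_image.mpr ⟨i, Finset.mem_range.mpr (lt_of_lt_of_le (Finset.mem_range.mp hi) hkl), rfl⟩
  have hUeq : (⋃ k, S k) = ⋃ r ∈ D ∩ Iic q, {ω | auxM N τ r ω < ε} := by
    ext ω
    simp only [hS, mem_iUnion, Finset.mem_image, Finset.mem_range, exists_prop]
    constructor
    · rintro ⟨k, r, ⟨i, _, rfl⟩, hωr⟩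
      exact ⟨e i, he ▸ mem_range_self i, hωr⟩
    · rintro ⟨r, hrD, hωr⟩
      obtain ⟨i, rfl⟩ := he ▸ hrD
      exact ⟨i + 1, e i, ⟨i, Nat.lt_succ_self i, rfl⟩, hωr⟩
  have htendS := tendsto_setIntegral_of_monotone hSm hSmono
    ((aux_integrable hmart hnn htend h0 q).integrableOn (s := ⋃ k, S k))
  rw [hUeq] at htendS
  refine le_of_tendsto htendS (Eventually.of_forall fun k => ?_)
  calc ∫ ω in S k, N q ω ∂ℙ ≤ ε * (ℙ (S k)).toReal :=
        aux_grid hmart hnn htend h0 hε _ q (hSsub k)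
    _ ≤ ε * 1 := by
        apply mul_le_mul_of_nonneg_left _ hε.le
        rw [show (1:ℝ) = (1:ℝ≥0∞).toReal by simp]
        exact ENNReal.toReal_mono ENNReal.one_ne_top prob_le_one
    _ = ε := mul_one ε

lemma aux_star (hmart : ∀ n, Martingale (MeasureTheory.stoppedProcess N (fun ω => (τ n ω : WithTop ℝ≥0))) 𝒢 ℙ)
    (hnn : ∀ t ω, 0 ≤ N t ω)
    (htend : ∀ᵐ ω ∂ℙ, Tendsto (fun n => τ n ω) atTop atTop)
    {c : ℝ} (h0 : ∀ ω, N 0 ω = c) {D : Set ℝ≥0} (hDc : D.Countable) :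
    ∀ᵐ ω ∂ℙ, ∀ q ∈ D, (∀ ε : ℝ, 0 < ε → ∃ r ∈ D, r ≤ q ∧ N r ω < ε) → N q ω = 0 := by
  have hBm : ∀ (r : ℝ≥0) (ε : ℝ), MeasurableSet {ω | auxM N τ r ω < ε} :=
    fun r ε => (𝒢.le r) _ ((auxM_meas hmart r) measurableSet_Iio)
  have hMq : ∀ q : ℝ≥0, ∀ δ : ℝ, MeasurableSet {ω | δ ≤ auxM N τ q ω} :=
    fun q δ => (𝒢.le q) _ ((auxM_meas hmart q) measurableSet_Ici)
  -- null sets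
  have hnull : ∀ q ∈ D, ∀ j : ℕ,
      ℙ ((⋂ mm : ℕ, ⋃ r ∈ D ∩ Iic q, {ω | auxM N τ r ω < 1 / (mm + 1)}) ∩
        {ω | 1 / ((j : ℝ) + 1) ≤ auxM N τ q ω}) = 0 := by
    intro q hq j
    set δ : ℝ := 1 / ((j : ℝ) + 1) with hδ
    have hδpos : 0 < δ := by positivity
    set C : Set Ω := (⋂ mm : ℕ, ⋃ r ∈ D ∩ Iic q, {ω | auxM N τ r ω < 1 / (mm + 1)}) ∩
      {ω | δ ≤ auxM N τ q ω} with hC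
    have hCm : MeasurableSet C := by
      apply MeasurableSet.inter _ (hMq q δ)
      exact MeasurableSet.iInter fun mm =>
        MeasurableSet.biUnion (hDc.mono inter_subset_left) (fun r _ => hBm r _)
    have hbound : ∀ mm : ℕ, δ * (ℙ C).toReal ≤ 1 / ((mm : ℝ) + 1) := by
      intro mm
      have hsub : C ⊆ ⋃ r ∈ D ∩ Iic q, {ω | auxM N τ r ω < 1 / ((mm : ℝ) + 1)} :=
        fun ω hω => mem_iInter.mp hω.1 mm
      have h1 : δ * (ℙ C).toReal ≤ ∫ ω in C, N q ω ∂ℙ := by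
        have hae : ∀ᵐ ω ∂ℙ.restrict C, δ ≤ N q ω := by
          have ha := ae_restrict_of_ae (auxM_ae hnn htend q (ℙ := ℙ)) (s := C)
          filter_upwards [ha, ae_restrict_mem (μ := ℙ) hCm] with ω hω1 hω2
          rw [← hω1]; exact hω2.2
        calc δ * (ℙ C).toReal = ∫ _ω in C, δ ∂ℙ := by rw [setIntegral_const]; simp [mul_comm, Measure.real]
          _ ≤ ∫ ω in C, N q ω ∂ℙ := integral_mono_ae (integrable_const δ).integrableOn
              ((aux_integrable hmart hnn htend h0 q).integrableOn) hae
      have h2 : ∫ ω in C, N q ω ∂ℙ ≤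
          ∫ ω in (⋃ r ∈ D ∩ Iic q, {ω | auxM N τ r ω < 1 / ((mm : ℝ) + 1)}), N q ω ∂ℙ := by
        apply setIntegral_mono_set ((aux_integrable hmart hnn htend h0 q).integrableOn)
          (Eventually.of_forall fun ω => hnn q ω) (HasSubset.Subset.eventuallyLE hsub)
      have h3 := aux_cover hmart hnn htend h0 (ε := 1 / ((mm : ℝ) + 1)) (by positivity) hDc hq
      linarith
    have hCz : (ℙ C).toReal = 0 := by
      by_contra hne
      have hpos : 0 < (ℙ C).toReal := lt_of_le_of_ne ENNReal.toReal_nonneg (Ne.symm hne)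
      obtain ⟨mm, hmm⟩ := exists_nat_one_div_lt (show 0 < δ * (ℙ C).toReal by positivity)
      exact absurd (hbound mm) (not_le.mpr hmm)
    rcases (ENNReal.toReal_eq_zero_iff _).mp hCz with h | h
    · exact h
    · exact absurd h (measure_ne_top _ _)
  -- combine
  have hae1 : ∀ᵐ ω ∂ℙ, ∀ r ∈ D, auxM N τ r ω = N r ω :=
    (ae_ball_iff hDc).mpr fun r _ => auxM_ae hnn htend r
  have hae2 : ∀ᵐ ω ∂ℙ, ∀ q ∈ D, ∀ j : ℕ,
      ω ∉ ((⋂ mm : ℕ, ⋃ r ∈ D ∩ Iic q, {ω | auxM N τ r ω < 1 / (mm + 1)}) ∩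
        {ω | 1 / ((j : ℝ) + 1) ≤ auxM N τ q ω}) := by
    refine (ae_ball_iff hDc).mpr fun q hq => ae_all_iff.mpr fun j => ?_
    exact (measure_eq_zero_iff_ae_notMem (μ := ℙ)).mp (hnull q hq j)
  filter_upwards [hae1, hae2] with ω h1 h2
  intro q hq hyp
  have hMN := h1 q hq
  refine le_antisymm ?_ (hnn q ω)
  by_contra hpos
  push_neg at hpos
  obtain ⟨j, hj⟩ := exists_nat_one_div_lt hpos
  apply h2 q hq j
  constructor
  · rw [mem_iInter]
    intro mm
    obtain ⟨r, hrD, hrq, hrlt⟩ := hyp (1 / ((mm : ℝ) + 1)) (by positivity)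
    exact mem_iUnion₂.mpr ⟨r, ⟨hrD, mem_Iic.mpr hrq⟩, by
      simp only [mem_setOf_eq]; rw [h1 r hrD]; exact hrlt⟩
  · simp only [mem_setOf_eq]
    rw [hMN]
    exact hj.le
end Meas

theorem stmt_15 {Ω : Type*} {m : MeasurableSpace Ω} {ℙ : Measure Ω}
    [IsProbabilityMeasure ℙ] (𝒢 : Filtration ℝ≥0 m) (N Nminus : ℝ≥0 → Ω → ℝ)
    (hloc : IsLocalMartingale 𝒢 N ℙ)
    (hnn : ∀ t ω, 0 ≤ N t ω)
    (hcadlag : CadlagPaths N)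
    (c : ℝ) (hc : 0 < c) (h0 : ∀ ω, N 0 ω = c)
    (hNm : ∀ ω, Nminus 0 ω = N 0 ω ∧ ∀ t : ℝ≥0, 0 < t →
      Tendsto (fun s => N s ω) (nhdsWithin t (Iio t)) (nhds (Nminus t ω))) :
    ∀ᵐ ω ∂ℙ,
      sInf {t : ℝ≥0 | N t ω = 0 ∨ Nminus t ω = 0} = sInf {t : ℝ≥0 | N t ω = 0} ∧
      ({t : ℝ≥0 | N t ω = 0}.Nonempty →
        ∀ u : ℝ≥0, sInf {t : ℝ≥0 | N t ω = 0} ≤ u → N u ω = 0) := by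
  obtain ⟨τ, hstop, htend, hmart⟩ := hloc
  obtain ⟨D, hDc, hD⟩ := TopologicalSpace.exists_countable_dense ℝ≥0
  filter_upwards [aux_star hmart hnn htend h0 hDc] with ω hω
  exact aux_pathwise (f := fun t => N t ω) (g := fun t => Nminus t ω)
    (hcadlag ω).1 (fun t => hnn t ω) hD hω (by simpa [h0 ω] using hc)
    (hNm ω).1 (hNm ω).2
end
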